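/- Let Δ₁, ..., Δ_k be d-dimensional constructible simplicial complexes such that the intersection of any two or more of them is constructible of dimension d. Then Δ₁ ∪ ⋯ ∪ Δ_k is constructible. -/
import Mathlib


open scoped BigOperators

/-- A (finite, abstract) simplicial complex on vertex set `V`:
a collection of finite subsets of `V` closed under taking subsets. -/
structure SC (V : Type*) where
  faces : Set (Finset V)
  down : ∀ ⦃s t : Finset V⦄, s ∈ faces → t ⊆ s → t ∈ faces

namespace SC

variable {V : Type*}

/-- The union of two simplicial complexes. -/
def union (Δ₁ Δ₂ : SC V) : SC V :=
  ⟨Δ₁.faces ∪ Δ₂.faces, by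
    rintro s t (h | h) hts
    · exact Or.inl (Δ₁.down h hts)
    · exact Or.inr (Δ₂.down h hts)⟩

/-- The intersection of two simplicial complexes. -/
def inter (Δ₁ Δ₂ : SC V) : SC V :=
  ⟨Δ₁.faces ∩ Δ₂.faces, fun _ _ h hts => ⟨Δ₁.down h.1 hts, Δ₂.down h.2 hts⟩⟩

/-- The simplex on a finite vertex set `s`: all subsets of `s`. -/
def simplex (s : Finset V) : SC V :=
  ⟨{t | t ⊆ s}, fun _ _ h h' => h'.trans h⟩

/-- The link of a face `F`: `{G \ F : G ∈ Δ, F ⊆ G}`. -/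
def link [DecidableEq V] (Δ : SC V) (F : Finset V) : SC V :=
  ⟨{G | Disjoint G F ∧ G ∪ F ∈ Δ.faces}, by
    rintro s t ⟨hd, hm⟩ hts
    exact ⟨hd.mono_left hts, Δ.down hm (Finset.union_subset_union hts le_rfl)⟩⟩

/-- The dimension of a simplicial complex, as an integer
(the complex `{∅}` has dimension `-1`). -/
noncomputable def dim (Δ : SC V) : ℤ :=
  sSup ((fun s : Finset V => (s.card : ℤ) - 1) '' Δ.faces)

/-- The geometric realization of a simplicial complex on a finite vertex set,
as a subspace of `V → ℝ`. -/
def realization [Fintype V] (Δ : SC V) : Set (V → ℝ) :=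
  {f | (∀ v, 0 ≤ f v) ∧ (∑ v, f v) = 1 ∧ ∃ s ∈ Δ.faces, ∀ v, f v ≠ 0 → v ∈ s}

end SC

/-- Constructibility (generalized): a `d`-dimensional complex is constructible
if it is a simplex, or the union of two `d`-dimensional constructible complexes
whose intersection is constructible of dimension at least `d - 1`. -/
inductive Constructible {V : Type*} : SC V → ℤ → Prop
  | simplex (s : Finset V) : Constructible (SC.simplex s) ((s.card : ℤ) - 1)
  | union {Δ₁ Δ₂ : SC V} {d e : ℤ} : Constructible Δ₁ d → Constructible Δ₂ d →
      d - 1 ≤ e → Constructible (SC.inter Δ₁ Δ₂) e →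
      Constructible (SC.union Δ₁ Δ₂) d

/-- A topological space is `k`-connected if it is nonempty (for `k ≥ -1`) and
all its homotopy groups `π_i` vanish for `0 ≤ i ≤ k`, at every basepoint. -/
def KConnected (k : ℤ) (X : Type*) [TopologicalSpace X] : Prop :=
  (-1 ≤ k → Nonempty X) ∧
    ∀ (x : X) (i : ℕ), (i : ℤ) ≤ k → Subsingleton (HomotopyGroup (Fin i) X x)

namespace SC

/-- The union of a finite family of simplicial complexes. -/
def unionFam {V ι : Type*} (S : Finset ι) (Δ : ι → SC V) : SC V :=
  ⟨{s | ∃ i ∈ S, s ∈ (Δ i).faces}, by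
    rintro s t ⟨i, hi, hs⟩ hts
    exact ⟨i, hi, (Δ i).down hs hts⟩⟩

/-- The intersection of a finite family of simplicial complexes. -/
def interFam {V ι : Type*} (S : Finset ι) (Δ : ι → SC V) : SC V :=
  ⟨{s | ∀ i ∈ S, s ∈ (Δ i).faces}, fun s t hs hts i hi => (Δ i).down (hs i hi) hts⟩

end SC

theorem SC.faces_ext {V : Type*} {Δ₁ Δ₂ : SC V} (h : Δ₁.faces = Δ₂.faces) : Δ₁ = Δ₂ := by
  cases Δ₁; cases Δ₂; simp_all

theorem constructible_congr {V : Type*} {Δ₁ Δ₂ : SC V} {d : ℤ} (h : Constructible Δ₁ d)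
    (he : Δ₁.faces = Δ₂.faces) : Constructible Δ₂ d := by
  rwa [SC.faces_ext he] at h

private def csEmb (k : ℕ) : Fin k ↪ Fin (k + 1) :=
  ⟨Fin.castSucc, Fin.castSucc_injective _⟩

private theorem aux_constructible {V : Type*} : ∀ (k : ℕ) (Δ : Fin k → SC V) (d : ℤ), 0 < k →
    (∀ i, Constructible (Δ i) d) →
    (∀ S : Finset (Fin k), 2 ≤ S.card → Constructible (SC.interFam S Δ) d) →
    Constructible (SC.unionFam Finset.univ Δ) d := by
  intro k
  induction k with
  | zero => intro _ _ h; omega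
  | succ k ih =>
    intro Δ d _ h hint
    rcases Nat.eq_zero_or_pos k with rfl | hk
    · refine constructible_congr (h 0) ?_
      ext s
      simp [SC.unionFam, Fin.exists_fin_one]
    · have hlast : ∀ i : Fin k, i.castSucc ≠ Fin.last k :=
        fun i => Fin.ne_of_lt (Fin.castSucc_lt_last i)
      -- the union of the first k complexes
      have hAc : Constructible (SC.unionFam Finset.univ (fun i : Fin k => Δ i.castSucc)) d := by
        refine ih _ d hk (fun i => h _) ?_
        intro S hS
        refine constructible_congr (hint (S.map (csEmb k)) (by simpa using hS)) ?_
        ext s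
        simp [SC.interFam, csEmb]
      -- the intersection of the first-k union with the last complex
      have hABc : Constructible
          (SC.inter (SC.unionFam Finset.univ (fun i : Fin k => Δ i.castSucc))
            (Δ (Fin.last k))) d := by
        have hΓ : ∀ i : Fin k,
            Constructible (SC.inter (Δ i.castSucc) (Δ (Fin.last k))) d := by
          intro i
          have hcard : 2 ≤ ({i.castSucc, Fin.last k} : Finset (Fin (k + 1))).card := by
            rw [Finset.card_insert_of_notMem (by simp [hlast i])]
            simp
          refine constructible_congr (hint _ hcard) ?_
          ext s
          simp [SC.interFam, SC.inter]
        have hintΓ : ∀ S : Finset (Fin k), 2 ≤ S.card →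
            Constructible (SC.interFam S
              (fun i : Fin k => SC.inter (Δ i.castSucc) (Δ (Fin.last k)))) d := by
          intro S hS
          obtain ⟨i₀, hi₀⟩ := Finset.card_pos.mp (by omega : 0 < S.card)
          have hcard : 2 ≤ (insert (Fin.last k) (S.map (csEmb k))).card :=
            le_trans (by simpa using hS) (Finset.card_le_card (Finset.subset_insert _ _))
          refine constructible_congr (hint _ hcard) ?_
          ext s
          simp only [SC.interFam, SC.inter, Set.mem_setOf_eq, Finset.mem_insert,
            Finset.mem_map, csEmb, Function.Embedding.coeFn_mk]
          constructor
          · intro hs i hi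
            exact ⟨hs i.castSucc (Or.inr ⟨i, hi, rfl⟩), hs (Fin.last k) (Or.inl rfl)⟩
          · rintro hs j (rfl | ⟨i, hi, rfl⟩)
            · exact (hs i₀ hi₀).2
            · exact (hs i hi).1
        have := ih (fun i : Fin k => SC.inter (Δ i.castSucc) (Δ (Fin.last k))) d hk hΓ hintΓ
        refine constructible_congr this ?_
        ext s
        simp only [SC.unionFam, SC.inter, Set.mem_setOf_eq, Set.mem_inter_iff,
          Finset.mem_univ, true_and, exists_true_left]
        tauto
      refine constructible_congr
        (Constructible.union hAc (h (Fin.last k)) (by linarith) hABc) ?_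
      ext s
      simp only [SC.union, SC.unionFam, Set.mem_union, Set.mem_setOf_eq,
        Finset.mem_univ, true_and]
      constructor
      · rintro (⟨i, hi⟩ | hlst)
        · exact ⟨i.castSucc, hi⟩
        · exact ⟨Fin.last k, hlst⟩
      · rintro ⟨i, hi⟩
        rcases Fin.eq_castSucc_or_eq_last i with ⟨j, rfl⟩ | rfl
        · exact Or.inl ⟨j, hi⟩
        · exact Or.inr hi

/-- If Δ₁, …, Δ_k are d-dimensional constructible simplicial complexes such
that the intersection of any two or more of them is constructible of
dimension d, then their union is constructible. -/
theorem constructible_unionFam_dim_d {V : Type*} (k : ℕ) (hk : 0 < k)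
    (Δ : Fin k → SC V) (d : ℤ)
    (h : ∀ i, Constructible (Δ i) d)
    (hint : ∀ S : Finset (Fin k), 2 ≤ S.card →
      Constructible (SC.interFam S Δ) d) :
    Constructible (SC.unionFam Finset.univ Δ) d := by
  exact aux_constructible k Δ d hk h hint
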